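/- For any set S ⊆ [n−1] and composition β of n, if S ⊆ set(β) △ (set(β)+1), then the set {n+1−s : s ∈ S} is contained in set(β^r) △ (set(β^r)+1), where β^r is the reverse composition. -/
import Mathlib


/-- A permutation `π` of `[n]` contains the pattern given by the word `τ` (of length `k`)
if some subsequence of the one-line notation of `π` has the same relative order as `τ`. -/
def PContains {n k : ℕ} (π : Equiv.Perm (Fin n)) (τ : Fin k → ℕ) : Prop :=
  ∃ f : Fin k → Fin n, StrictMono f ∧ ∀ i j : Fin k, τ i < τ j ↔ π (f i) < π (f j)

/-- `π` avoids the pattern `τ`. -/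
def PAvoids {n k : ℕ} (π : Equiv.Perm (Fin n)) (τ : Fin k → ℕ) : Prop :=
  ¬ PContains π τ

/-- The `i`-th entry (1-indexed, values in `1..n`) of the one-line notation of `π`;
`0` if `i` is out of range. -/
def entry {n : ℕ} (π : Equiv.Perm (Fin n)) (i : ℕ) : ℕ :=
  if h : 1 ≤ i ∧ i ≤ n then ((π ⟨i - 1, by omega⟩ : Fin n) : ℕ) + 1 else 0

/-- `i` is a peak of `π`: `2 ≤ i ≤ n-1` and `π_{i-1} < π_i > π_{i+1}`. -/
def IsPeak {n : ℕ} (π : Equiv.Perm (Fin n)) (i : ℕ) : Prop :=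
  2 ≤ i ∧ i + 1 ≤ n ∧ entry π (i - 1) < entry π i ∧ entry π (i + 1) < entry π i

/-- The peak set of `π` (as a set of 1-indexed positions). -/
def peakSet {n : ℕ} (π : Equiv.Perm (Fin n)) : Set ℕ := {i | IsPeak π i}

/-- The reverse of `π`: `(π^r)_i = π_{n+1-i}`. -/
def reversePerm {n : ℕ} (π : Equiv.Perm (Fin n)) : Equiv.Perm (Fin n) :=
  (Fin.revPerm : Equiv.Perm (Fin n)).trans π

/-- `set(β)` for a composition `β`, viewed as a list of its parts: the partial sums
`β_1, β_1+β_2, …, β_1+⋯+β_{k-1}`. -/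
def compSet (β : List ℕ) : Set ℕ :=
  { s | ∃ i : ℕ, 0 < i ∧ i < β.length ∧ s = (β.take i).sum }


lemma compSet_bounds {n : ℕ} {β : List ℕ} (hpos : ∀ x ∈ β, 0 < x) (hsum : β.sum = n)
    {u : ℕ} (hu : u ∈ compSet β) : 1 ≤ u ∧ u ≤ n - 1 := by
  obtain ⟨i, hi0, hik, rfl⟩ := hu
  have htd : (β.take i).sum + (β.drop i).sum = n := by
    rw [← List.sum_append, List.take_append_drop, hsum]
  have h1 : 0 < (β.take i).sum := by
    apply List.sum_pos
    · intro x hx; exact hpos x (List.mem_of_mem_take hx)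
    · intro hnil
      have := congrArg List.length hnil
      simp only [List.length_take, List.length_nil] at this
      omega
  have h2 : 0 < (β.drop i).sum := by
    apply List.sum_pos
    · intro x hx; exact hpos x (List.mem_of_mem_drop hx)
    · intro hnil
      have := congrArg List.length hnil
      simp only [List.length_drop, List.length_nil] at this
      omega
  omega

lemma compSet_reverse_mem {n : ℕ} {β : List ℕ} (hsum : β.sum = n) {t : ℕ} :
    t ∈ compSet β.reverse ↔ ∃ u ∈ compSet β, t = n - u := by
  constructor
  · rintro ⟨i, hi0, hik, rfl⟩
    rw [List.length_reverse] at hik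
    refine ⟨(β.take (β.length - i)).sum, ⟨β.length - i, by omega, by omega, rfl⟩, ?_⟩
    rw [List.take_reverse, List.sum_reverse]
    have : (β.take (β.length - i)).sum + (β.drop (β.length - i)).sum = n := by
      rw [← List.sum_append, List.take_append_drop, hsum]
    omega
  · rintro ⟨u, ⟨j, hj0, hjk, rfl⟩, rfl⟩
    refine ⟨β.length - j, by omega, by rw [List.length_reverse]; omega, ?_⟩
    rw [List.take_reverse, List.sum_reverse]
    have hlen : β.length - (β.length - j) = j := by omega
    rw [hlen]
    have : (β.take j).sum + (β.drop j).sum = n := by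
      rw [← List.sum_append, List.take_append_drop, hsum]
    omega

/-- If `S ⊆ [n-1]` satisfies `S ⊆ set(β) △ (set(β)+1)`, then
`{ n+1-s : s ∈ S } ⊆ set(β^r) △ (set(β^r)+1)`. -/
theorem stmt16 (n : ℕ) (β : List ℕ) (hpos : ∀ x ∈ β, 0 < x) (hsum : β.sum = n)
    (S : Set ℕ) (hS : S ⊆ Set.Icc 1 (n - 1))
    (h : S ⊆ symmDiff (compSet β) ((fun x => x + 1) '' compSet β)) :
    (fun s => n + 1 - s) '' S ⊆
      symmDiff (compSet β.reverse) ((fun x => x + 1) '' compSet β.reverse) := by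
  rintro t ⟨s, hsS, rfl⟩
  obtain ⟨hs1, hs2⟩ := hS hsS
  have hn : 2 ≤ n := by
    rcases Nat.lt_or_ge n 2 with h' | h'
    · exfalso; omega
    · exact h'
  have hb := fun u hu => compSet_bounds hpos hsum (u := u) hu
  have hA : (n + 1 - s) ∈ compSet β.reverse ↔ (s - 1) ∈ compSet β := by
    rw [compSet_reverse_mem hsum]
    constructor
    · rintro ⟨u, hu, heq⟩
      obtain ⟨hu1, hu2⟩ := hb u hu
      have : u = s - 1 := by omega
      rwa [← this]
    · intro hmem
      obtain ⟨hu1, hu2⟩ := hb _ hmem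
      exact ⟨s - 1, hmem, by omega⟩
  have hB : (n + 1 - s) ∈ (fun x => x + 1) '' compSet β.reverse ↔ s ∈ compSet β := by
    constructor
    · rintro ⟨v, hv, heq⟩
      rw [compSet_reverse_mem hsum] at hv
      obtain ⟨u, hu, rfl⟩ := hv
      obtain ⟨hu1, hu2⟩ := hb u hu
      simp only at heq
      have : u = s := by omega
      rwa [← this]
    · intro hmem
      obtain ⟨hu1, hu2⟩ := hb _ hmem
      refine ⟨n - s, ?_, by simp; omega⟩
      rw [compSet_reverse_mem hsum]
      exact ⟨s, hmem, rfl⟩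
  have hC : s ∈ (fun x => x + 1) '' compSet β ↔ (s - 1) ∈ compSet β := by
    constructor
    · rintro ⟨u, hu, heq⟩
      simp only at heq
      have : u = s - 1 := by omega
      rwa [← this]
    · intro hmem
      exact ⟨s - 1, hmem, by simp; omega⟩
  have hsd := h hsS
  rw [Set.mem_symmDiff] at hsd ⊢
  rw [hA, hB]
  rw [hC] at hsd
  tauto
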